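/- For every positive integer k there exists a tree T with γ_g(T) = k and γ_g'(T) = k + 1. -/

import Mathlib

open Finset

namespace DomGame

variable {V : Type*} [Fintype V] [DecidableEq V]

/-- Closed neighborhood of `v` in `G`, as a `Finset`. -/
noncomputable def cn (G : SimpleGraph V) (v : V) : Finset V :=
  haveI : DecidablePred (fun u : V => u = v ∨ G.Adj v u) := fun _ => Classical.propDecidable _
  Finset.univ.filter (fun u : V => u = v ∨ G.Adj v u)

/-- Value (number of remaining moves, optimal play) of the domination game on `G`,
with fuel, where `D` is the set of already dominated vertices and `who = true`
means Dominator is to move (minimizing); `who = false` means Staller (maximizing). -/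
noncomputable def auxVal (G : SimpleGraph V) : ℕ → Bool → Finset V → ℕ
  | 0, _, _ => 0
  | n + 1, who, D =>
    if D = Finset.univ then 0
    else
      haveI : DecidablePred (fun v : V => ¬ cn G v ⊆ D) := fun _ => Classical.propDecidable _
      let moves : Finset V := Finset.univ.filter (fun v : V => ¬ cn G v ⊆ D)
      if who then
        WithTop.untopD 0 ((moves.image (fun v => 1 + auxVal G n false (D ∪ cn G v))).min)
      else
        moves.sup (fun v => 1 + auxVal G n true (D ∪ cn G v))

/-- Remaining moves of the domination game on the partially dominated graph `(G, D)`,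
Dominator to move, both players optimal. -/
noncomputable def gVal (G : SimpleGraph V) (D : Finset V) : ℕ :=
  auxVal G (Fintype.card V) true D

/-- Remaining moves, Staller to move. -/
noncomputable def gVal' (G : SimpleGraph V) (D : Finset V) : ℕ :=
  auxVal G (Fintype.card V) false D

/-- The game domination number (Dominator starts). -/
noncomputable def gammaG (G : SimpleGraph V) : ℕ := gVal G ∅

/-- The Staller-start game domination number. -/
noncomputable def gammaG' (G : SimpleGraph V) : ℕ := gVal' G ∅

/-- `S` is a dominating set of `G`. -/
def IsDomSet (G : SimpleGraph V) (S : Finset V) : Prop :=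
  ∀ v : V, ∃ u ∈ S, u = v ∨ G.Adj u v

/-- The domination number of `G`. -/
noncomputable def gamma (G : SimpleGraph V) : ℕ :=
  sInf {n | ∃ S : Finset V, IsDomSet G S ∧ S.card = n}

end DomGame


namespace DomGameAux

open DomGame

variable {V : Type*} [Fintype V] [DecidableEq V] {G : SimpleGraph V}

lemma mem_cn {v u : V} : u ∈ cn G v ↔ u = v ∨ G.Adj v u := by
  classical
  rw [cn]
  simp [Finset.mem_filter]

lemma self_mem_cn {v : V} : v ∈ cn G v := mem_cn.2 (Or.inl rfl)

lemma legal_self {v : V} {D : Finset V} (h : v ∉ D) : ¬ cn G v ⊆ D :=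
  fun hs => h (hs self_mem_cn)

lemma exists_legal {D : Finset V} (hD : D ≠ Finset.univ) : ∃ v, v ∉ D ∧ ¬ cn G v ⊆ D := by
  obtain ⟨u, hu⟩ : ∃ u, u ∉ D := by
    by_contra h
    push_neg at h
    exact hD (Finset.eq_univ_iff_forall.2 h)
  exact ⟨u, hu, legal_self hu⟩

/-- The set of legal moves, with the same decidability instance as in `auxVal`. -/
noncomputable def movesSet (G : SimpleGraph V) (D : Finset V) : Finset V :=
  @Finset.filter _ (fun v : V => ¬ cn G v ⊆ D) (fun _ => Classical.propDecidable _) Finset.univ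

lemma mem_movesSet {D : Finset V} {v : V} : v ∈ movesSet G D ↔ ¬ cn G v ⊆ D := by
  classical
  rw [movesSet]
  simp [Finset.mem_filter]

lemma auxVal_zero {who : Bool} {D : Finset V} : auxVal G 0 who D = 0 := rfl

lemma auxVal_univ {n : ℕ} {who : Bool} : auxVal G (n + 1) who Finset.univ = 0 := by
  rw [auxVal]
  simp

lemma auxVal_succ_true {n : ℕ} {D : Finset V} (hD : D ≠ Finset.univ) :
    auxVal G (n + 1) true D =
      WithTop.untopD 0 (((movesSet G D).image
        (fun v => 1 + auxVal G n false (D ∪ cn G v))).min) := by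
  rw [auxVal, if_neg hD]
  rfl

lemma auxVal_succ_false {n : ℕ} {D : Finset V} (hD : D ≠ Finset.univ) :
    auxVal G (n + 1) false D =
      (movesSet G D).sup (fun v => 1 + auxVal G n true (D ∪ cn G v)) := by
  rw [auxVal, if_neg hD]
  rfl

lemma auxVal_true_le {n : ℕ} {D : Finset V} {v : V} (hD : D ≠ Finset.univ)
    (hv : ¬ cn G v ⊆ D) :
    auxVal G (n + 1) true D ≤ 1 + auxVal G n false (D ∪ cn G v) := by
  rw [auxVal_succ_true hD]
  have hvm : v ∈ movesSet G D := mem_movesSet.2 hv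
  have himg : 1 + auxVal G n false (D ∪ cn G v) ∈
      (movesSet G D).image (fun v => 1 + auxVal G n false (D ∪ cn G v)) :=
    Finset.mem_image_of_mem _ hvm
  have hne : ((movesSet G D).image (fun v => 1 + auxVal G n false (D ∪ cn G v))).Nonempty :=
    ⟨_, himg⟩
  rw [← Finset.coe_min' hne, WithTop.untopD_coe]
  exact Finset.min'_le _ _ himg

lemma le_auxVal_false {n : ℕ} {D : Finset V} {v : V} (hD : D ≠ Finset.univ)
    (hv : ¬ cn G v ⊆ D) :
    1 + auxVal G n true (D ∪ cn G v) ≤ auxVal G (n + 1) false D := by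
  rw [auxVal_succ_false hD]
  exact Finset.le_sup (f := fun v => 1 + auxVal G n true (D ∪ cn G v)) (mem_movesSet.2 hv)

lemma auxVal_false_le {n : ℕ} {D : Finset V} {m : ℕ}
    (h : ∀ v, ¬ cn G v ⊆ D → 1 + auxVal G n true (D ∪ cn G v) ≤ m) :
    auxVal G (n + 1) false D ≤ m := by
  by_cases hD : D = Finset.univ
  · subst hD
    rw [auxVal_univ]
    exact Nat.zero_le m
  · rw [auxVal_succ_false hD]
    exact Finset.sup_le fun v hv => h v (mem_movesSet.1 hv)

lemma sdiff_union_eq {D E : Finset V} :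
    Finset.univ \ (D ∪ E) = (Finset.univ \ D) \ E := by
  ext x
  simp only [Finset.mem_sdiff, Finset.mem_union, Finset.mem_univ, true_and]
  tauto

/-- Endgame lemma: if all undominated vertices lie in a "packing" set `T`
(each closed neighborhood meets `T` in at most one vertex), the game value is
exactly the number of undominated vertices. -/
lemma lemA (G : SimpleGraph V) (T : Finset V) (hT : ∀ v, (cn G v ∩ T).card ≤ 1) :
    ∀ (n : ℕ) (D : Finset V), Finset.univ \ D ⊆ T → (Finset.univ \ D).card ≤ n →
      ∀ who, auxVal G n who D = (Finset.univ \ D).card := by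
  intro n
  induction n with
  | zero =>
    intro D _ hcard who
    rw [auxVal_zero]
    omega
  | succ n ih =>
    intro D hsubT hcard who
    by_cases hD : D = Finset.univ
    · subst hD
      rw [auxVal_univ, Finset.sdiff_self, Finset.card_empty]
    · obtain ⟨u, hu, hulegal⟩ := exists_legal (G := G) hD
      have hune : u ∈ Finset.univ \ D := Finset.mem_sdiff.2 ⟨Finset.mem_univ u, hu⟩
      have hUpos : 1 ≤ (Finset.univ \ D).card := Finset.card_pos.2 ⟨u, hune⟩
      have key : ∀ (b : Bool) (v : V), ¬ cn G v ⊆ D →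
          auxVal G n b (D ∪ cn G v) = (Finset.univ \ D).card - 1 := by
        intro b v hv
        have hsd : Finset.univ \ (D ∪ cn G v) = (Finset.univ \ D) \ cn G v := sdiff_union_eq
        have hinter : ((Finset.univ \ D) ∩ cn G v).card = 1 := by
          have hle : (Finset.univ \ D) ∩ cn G v ⊆ cn G v ∩ T := by
            intro x hx
            rw [Finset.mem_inter] at hx ⊢
            exact ⟨hx.2, hsubT hx.1⟩
          have h1 : ((Finset.univ \ D) ∩ cn G v).card ≤ 1 :=
            le_trans (Finset.card_le_card hle) (hT v)
          obtain ⟨x, hx1, hx2⟩ := Finset.not_subset.1 hv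
          have : x ∈ (Finset.univ \ D) ∩ cn G v :=
            Finset.mem_inter.2 ⟨Finset.mem_sdiff.2 ⟨Finset.mem_univ x, hx2⟩, hx1⟩
          have h2 : 1 ≤ ((Finset.univ \ D) ∩ cn G v).card := Finset.card_pos.2 ⟨x, this⟩
          omega
        have hcards := Finset.card_inter_add_card_sdiff (Finset.univ \ D) (cn G v)
        have hcard' : (Finset.univ \ (D ∪ cn G v)).card = (Finset.univ \ D).card - 1 := by
          rw [hsd]; omega
        have := ih (D ∪ cn G v) (by rw [hsd]; exact le_trans (Finset.sdiff_subset) hsubT)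
          (by omega) b
        rw [this, hcard']
      cases who with
      | true =>
        rw [auxVal_succ_true hD]
        have hvm : u ∈ movesSet G D := mem_movesSet.2 hulegal
        have himg : 1 + auxVal G n false (D ∪ cn G u) ∈
            (movesSet G D).image (fun v => 1 + auxVal G n false (D ∪ cn G v)) :=
          Finset.mem_image_of_mem _ hvm
        have hne : ((movesSet G D).image
            (fun v => 1 + auxVal G n false (D ∪ cn G v))).Nonempty := ⟨_, himg⟩
        rw [← Finset.coe_min' hne, WithTop.untopD_coe]
        have hmem := Finset.min'_mem _ hne
        obtain ⟨v, hv, hveq⟩ := Finset.mem_image.1 hmem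
        rw [← hveq, key false v (mem_movesSet.1 hv)]
        omega
      | false =>
        rw [auxVal_succ_false hD]
        apply le_antisymm
        · apply Finset.sup_le
          intro v hv
          rw [key true v (mem_movesSet.1 hv)]
          omega
        · calc (Finset.univ \ D).card = 1 + auxVal G n true (D ∪ cn G u) := by
                rw [key true u hulegal]; omega
            _ ≤ _ := Finset.le_sup (f := fun v => 1 + auxVal G n true (D ∪ cn G v))
                (mem_movesSet.2 hulegal)

/-- Lower bound lemma: a packing set `P` forces at least `|P ∩ undominated|` moves. -/
lemma lemB (G : SimpleGraph V) (P : Finset V) (hP : ∀ v, (cn G v ∩ P).card ≤ 1) :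
    ∀ (n : ℕ) (D : Finset V), (Finset.univ \ D).card ≤ n →
      ∀ who, ((Finset.univ \ D) ∩ P).card ≤ auxVal G n who D := by
  intro n
  induction n with
  | zero =>
    intro D hcard who
    have : ((Finset.univ \ D) ∩ P).card ≤ (Finset.univ \ D).card :=
      Finset.card_le_card Finset.inter_subset_left
    rw [auxVal_zero]
    omega
  | succ n ih =>
    intro D hcard who
    by_cases hD : D = Finset.univ
    · subst hD
      rw [auxVal_univ, Finset.sdiff_self, Finset.empty_inter, Finset.card_empty]
    · have key : ∀ (b : Bool) (v : V), ¬ cn G v ⊆ D →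
          ((Finset.univ \ D) ∩ P).card ≤ 1 + auxVal G n b (D ∪ cn G v) := by
        intro b v hv
        have hsd : Finset.univ \ (D ∪ cn G v) = (Finset.univ \ D) \ cn G v := sdiff_union_eq
        -- undominated shrinks strictly
        obtain ⟨x, hx1, hx2⟩ := Finset.not_subset.1 hv
        have hxmem : x ∈ (Finset.univ \ D) ∩ cn G v :=
          Finset.mem_inter.2 ⟨Finset.mem_sdiff.2 ⟨Finset.mem_univ x, hx2⟩, hx1⟩
        have hipos : 1 ≤ ((Finset.univ \ D) ∩ cn G v).card := Finset.card_pos.2 ⟨x, hxmem⟩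
        have hcards := Finset.card_inter_add_card_sdiff (Finset.univ \ D) (cn G v)
        have hfuel : (Finset.univ \ (D ∪ cn G v)).card ≤ n := by rw [hsd]; omega
        have hIH := ih (D ∪ cn G v) hfuel b
        -- count of P-vertices drops by at most 1
        have hsetP : (Finset.univ \ (D ∪ cn G v)) ∩ P = ((Finset.univ \ D) ∩ P) \ (cn G v ∩ P) := by
          rw [hsd]; ext y; simp; tauto
        have hdrop : ((Finset.univ \ D) ∩ P).card ≤
            ((Finset.univ \ (D ∪ cn G v)) ∩ P).card + (cn G v ∩ P).card := by
          rw [hsetP]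
          exact Finset.card_le_card_sdiff_add_card
        have := hP v
        omega
      cases who with
      | true =>
        rw [auxVal_succ_true hD]
        obtain ⟨u, hu, hulegal⟩ := exists_legal (G := G) hD
        have hvm : u ∈ movesSet G D := mem_movesSet.2 hulegal
        have himg : 1 + auxVal G n false (D ∪ cn G u) ∈
            (movesSet G D).image (fun v => 1 + auxVal G n false (D ∪ cn G v)) :=
          Finset.mem_image_of_mem _ hvm
        have hne : ((movesSet G D).image
            (fun v => 1 + auxVal G n false (D ∪ cn G v))).Nonempty := ⟨_, himg⟩
        rw [← Finset.coe_min' hne, WithTop.untopD_coe]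
        have hmem := Finset.min'_mem _ hne
        obtain ⟨v, hv, hveq⟩ := Finset.mem_image.1 hmem
        rw [← hveq]
        exact key false v (mem_movesSet.1 hv)
      | false =>
        rw [auxVal_succ_false hD]
        obtain ⟨u, hu, hulegal⟩ := exists_legal (G := G) hD
        exact le_trans (key true u hulegal)
          (Finset.le_sup (f := fun v => 1 + auxVal G n true (D ∪ cn G v))
            (mem_movesSet.2 hulegal))

end DomGameAux

namespace DomGameTree

open DomGame DomGameAux SimpleGraph

/-- `pr a b` : `b` is the parent of `a` in our tree: the tree has center `0` with
pendant leaves `1`, `2`, spokes (odd vertices `≥ 3`, children of `0`), each spoke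
`s` having a pendant leaf `s+1` (even vertices `≥ 4`). -/
def pr (a b : ℕ) : Prop :=
  (b = 0 ∧ a ≠ 0 ∧ (a % 2 = 1 ∨ a ≤ 2)) ∨ (a % 2 = 0 ∧ 4 ≤ a ∧ b + 1 = a)

/-- The tree witnessing the statement, on `Fin n` (used with `n = 2k+1`). -/
def Gk (n : ℕ) : SimpleGraph (Fin n) := SimpleGraph.fromRel (fun u v => pr u.val v.val)

lemma pr_lt {a b : ℕ} (h : pr a b) : b < a := by
  rcases h with ⟨rfl, h1, _⟩ | ⟨_, _, h⟩ <;> omega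

lemma parent_unique {a b c : ℕ} (h1 : pr a b) (h2 : pr a c) : b = c := by
  rcases h1 with h1 | h1 <;> rcases h2 with h2 | h2 <;> omega

lemma adj_iff {n : ℕ} {u v : Fin n} :
    (Gk n).Adj u v ↔ u ≠ v ∧ (pr u.val v.val ∨ pr v.val u.val) := by
  rw [Gk, SimpleGraph.fromRel_adj]

lemma mem_cn_iff {n : ℕ} {v u : Fin n} :
    u ∈ cn (Gk n) v ↔ u.val = v.val ∨ pr u.val v.val ∨ pr v.val u.val := by
  rw [mem_cn]
  constructor
  · rintro (rfl | h)
    · exact Or.inl rfl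
    · rw [adj_iff] at h
      tauto
  · intro h
    by_cases huv : u = v
    · exact Or.inl huv
    · rcases h with h | h | h
      · exact absurd (Fin.ext h) huv
      · exact Or.inr (adj_iff.2 ⟨Ne.symm huv, Or.inr h⟩)
      · exact Or.inr (adj_iff.2 ⟨Ne.symm huv, Or.inl h⟩)

/-- In any walk ending at `m`, either the walk is trivial or there is a last edge. -/
lemma exists_last_edge {V : Type*} {G : SimpleGraph V} {u m : V} (p : G.Walk u m) :
    u = m ∨ ∃ w, G.Adj w m ∧ s(w, m) ∈ p.edges := by
  induction p with
  | nil => exact Or.inl rfl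
  | cons h q ih =>
    rcases ih with rfl | ⟨w, hw1, hw2⟩
    · exact Or.inr ⟨_, h, by simp⟩
    · exact Or.inr ⟨w, hw1, by simp [hw2]⟩

lemma no_cycle_at_max {n : ℕ} {m : Fin n} (c : (Gk n).Walk m m) (hc : c.IsCycle)
    (hmax : ∀ x ∈ c.support, x.val ≤ m.val) : False := by
  cases c with
  | nil => exact SimpleGraph.Walk.IsCycle.not_of_nil hc
  | @cons _ u _ h p =>
    rw [SimpleGraph.Walk.cons_isCycle_iff] at hc
    obtain ⟨hpath, hedge⟩ := hc
    have humem : u ∈ (SimpleGraph.Walk.cons h p).support := by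
      rw [SimpleGraph.Walk.support_cons]
      exact List.mem_cons_of_mem _ p.start_mem_support
    have hum : u ≠ m := fun he => (Gk n).irrefl (he ▸ h)
    have hu_lt : u.val < m.val :=
      lt_of_le_of_ne (hmax u humem) (fun hh => hum (Fin.ext hh))
    rcases exists_last_edge p with rfl | ⟨w, hw1, hw2⟩
    · exact hum rfl
    · have hwm : w ≠ m := hw1.ne
      have hwmem : w ∈ (SimpleGraph.Walk.cons h p).support := by
        rw [SimpleGraph.Walk.support_cons]
        exact List.mem_cons_of_mem _ (p.fst_mem_support_of_mem_edges hw2)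
      have hw_lt : w.val < m.val :=
        lt_of_le_of_ne (hmax w hwmem) (fun hh => hwm (Fin.ext hh))
      have h1 : pr m.val u.val := by
        rcases adj_iff.1 h with ⟨_, hp' | hp'⟩
        · exact hp'
        · exact absurd (pr_lt hp') (by omega)
      have h2 : pr m.val w.val := by
        rcases adj_iff.1 hw1 with ⟨_, hp' | hp'⟩
        · exact absurd (pr_lt hp') (by omega)
        · exact hp'
      have huw : u = w := Fin.ext (parent_unique h1 h2)
      subst huw
      rw [Sym2.eq_swap] at hw2
      exact hedge hw2

lemma Gk_isAcyclic (n : ℕ) : (Gk n).IsAcyclic := by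
  intro v c hc
  obtain ⟨m, hm_mem, hm_max⟩ := Finset.exists_max_image c.support.toFinset
    (fun x : Fin n => x.val) ⟨v, List.mem_toFinset.2 c.start_mem_support⟩
  rw [List.mem_toFinset] at hm_mem
  have hmax : ∀ x ∈ (c.rotate m hm_mem).support, x.val ≤ m.val := by
    intro x hx
    rw [SimpleGraph.Walk.support_eq_cons] at hx
    rcases List.mem_cons.1 hx with rfl | hx
    · exact le_refl _
    · have hperm := SimpleGraph.Walk.support_rotate c m hm_mem
      have hxmem : x ∈ c.support.tail := hperm.mem_iff.1 hx
      exact hm_max x (List.mem_toFinset.2 (List.mem_of_mem_tail hxmem))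
  exact no_cycle_at_max (c.rotate m hm_mem) (hc.rotate hm_mem) hmax

/-- Parent function. -/
def parN (a : ℕ) : ℕ := if a % 2 = 0 ∧ 4 ≤ a then a - 1 else 0

lemma parN_spec {a : ℕ} (h : a ≠ 0) : pr a (parN a) ∧ parN a < a := by
  simp only [pr, parN]
  split_ifs <;> omega

lemma Gk_reachable {n : ℕ} (hn : 0 < n) (v : Fin n) : (Gk n).Reachable ⟨0, hn⟩ v := by
  suffices h : ∀ a : ℕ, ∀ v : Fin n, v.val = a → (Gk n).Reachable ⟨0, hn⟩ v from h v.val v rfl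
  intro a
  induction a using Nat.strong_induction_on with
  | _ a ih =>
    intro v hv
    by_cases h0 : v.val = 0
    · have : v = ⟨0, hn⟩ := Fin.ext h0
      rw [this]
    · obtain ⟨hpr, hlt⟩ := parN_spec h0
      have hb : parN v.val < n := lt_trans hlt v.isLt
      have hadj : (Gk n).Adj v ⟨parN v.val, hb⟩ :=
        adj_iff.2 ⟨Fin.ne_of_val_ne hlt.ne', Or.inl hpr⟩
      exact ((ih (parN v.val) (hv ▸ hlt) ⟨parN v.val, hb⟩ rfl)).trans hadj.symm.reachable

lemma Gk_isTree {n : ℕ} (hn : 0 < n) : (Gk n).IsTree := by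
  constructor
  · rw [SimpleGraph.connected_iff]
    exact ⟨fun a b => (Gk_reachable hn a).symm.trans (Gk_reachable hn b), ⟨⟨0, hn⟩⟩⟩
  · exact Gk_isAcyclic n

/-! ### Counting -/

lemma card_val_filter {n : ℕ} (P : Fin n → Prop) [DecidablePred P]
    (Q : ℕ → Prop) [DecidablePred Q] (hPQ : ∀ u : Fin n, P u ↔ Q u.val) :
    (Finset.univ.filter P).card = ((Finset.range n).filter Q).card := by
  apply Finset.card_bij (fun a _ => a.val)
  · intro a ha
    simp only [Finset.mem_filter, Finset.mem_univ, true_and] at ha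
    simp only [Finset.mem_filter, Finset.mem_range]
    exact ⟨a.isLt, (hPQ a).1 ha⟩
  · intro a _ b _ h
    exact Fin.ext h
  · intro b hb
    simp only [Finset.mem_filter, Finset.mem_range] at hb
    exact ⟨⟨b, hb.1⟩, by
      simp only [Finset.mem_filter, Finset.mem_univ, true_and]
      exact (hPQ ⟨b, hb.1⟩).2 hb.2, rfl⟩

lemma count1 (k : ℕ) :
    ((Finset.range (2*k+1)).filter (fun m => m % 2 = 0 ∧ 4 ≤ m)).card = k - 1 := by
  have h : (Finset.range (2*k+1)).filter (fun m => m % 2 = 0 ∧ 4 ≤ m)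
      = (Finset.range (k-1)).image (fun i => 2*i+4) := by
    ext m
    simp only [Finset.mem_filter, Finset.mem_range, Finset.mem_image]
    constructor
    · rintro ⟨h1, h2, h3⟩
      exact ⟨(m-4)/2, by omega, by omega⟩
    · rintro ⟨i, hi, rfl⟩
      omega
  rw [h, Finset.card_image_of_injective _ (fun a b hab => by omega), Finset.card_range]

lemma count2 (k : ℕ) :
    ((Finset.range (2*k+1)).filter (fun m => m % 2 = 0 ∧ m ≠ 0)).card = k := by
  have h : (Finset.range (2*k+1)).filter (fun m => m % 2 = 0 ∧ m ≠ 0)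
      = (Finset.range k).image (fun i => 2*i+2) := by
    ext m
    simp only [Finset.mem_filter, Finset.mem_range, Finset.mem_image]
    constructor
    · rintro ⟨h1, h2, h3⟩
      exact ⟨(m-2)/2, by omega, by omega⟩
    · rintro ⟨i, hi, rfl⟩
      omega
  rw [h, Finset.card_image_of_injective _ (fun a b hab => by omega), Finset.card_range]

lemma count3 {k : ℕ} (hk : 1 ≤ k) :
    ((Finset.range (2*k+1)).filter (fun m => m = 1 ∨ (m % 2 = 0 ∧ 4 ≤ m))).card = k := by
  have h : (Finset.range (2*k+1)).filter (fun m => m = 1 ∨ (m % 2 = 0 ∧ 4 ≤ m))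
      = insert 1 ((Finset.range (2*k+1)).filter (fun m => m % 2 = 0 ∧ 4 ≤ m)) := by
    ext m
    simp only [Finset.mem_filter, Finset.mem_range, Finset.mem_insert]
    constructor
    · rintro ⟨h1, h2⟩
      tauto
    · rintro (rfl | ⟨h1, h2⟩)
      · exact ⟨by omega, Or.inl rfl⟩
      · exact ⟨h1, Or.inr h2⟩
  rw [h, Finset.card_insert_of_notMem (by simp only [Finset.mem_filter]; omega), count1]
  omega

end DomGameTree

namespace DomGameTree

open DomGame DomGameAux SimpleGraph

variable {k : ℕ}

/-- The center of the tree. -/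
def c0 (k : ℕ) : Fin (2*k+1) := ⟨0, by omega⟩

/-- A pendant leaf attached to the center. -/
def c1 (k : ℕ) : Fin (2*k+1) := ⟨2*k - (2*k-1), by omega⟩

@[simp] lemma val_c0 : (c0 k).val = 0 := rfl
lemma val_c1 (hk : 1 ≤ k) : (c1 k).val = 1 := by
  show 2*k - (2*k-1) = 1
  omega

/-- The packing set `T`: all even nonzero vertices (vertex `2` and the outer leaves). -/
def Tset (k : ℕ) : Finset (Fin (2*k+1)) :=
  Finset.univ.filter (fun u => u.val % 2 = 0 ∧ u.val ≠ 0)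

/-- The packing set `P`: vertex `1` and the outer leaves. -/
def Pset (k : ℕ) : Finset (Fin (2*k+1)) :=
  Finset.univ.filter (fun u => u.val = 1 ∨ (u.val % 2 = 0 ∧ 4 ≤ u.val))

lemma mem_Tset {u : Fin (2*k+1)} : u ∈ Tset k ↔ u.val % 2 = 0 ∧ u.val ≠ 0 := by
  simp [Tset]

lemma mem_Pset {u : Fin (2*k+1)} :
    u ∈ Pset k ↔ u.val = 1 ∨ (u.val % 2 = 0 ∧ 4 ≤ u.val) := by
  simp [Pset]

lemma hT_packing : ∀ v, (cn (Gk (2*k+1)) v ∩ Tset k).card ≤ 1 := by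
  intro v
  rw [Finset.card_le_one]
  intro a ha b hb
  rw [Finset.mem_inter, mem_Tset, mem_cn_iff] at ha hb
  apply Fin.ext
  simp only [pr] at ha hb
  omega

lemma hP_packing : ∀ v, (cn (Gk (2*k+1)) v ∩ Pset k).card ≤ 1 := by
  intro v
  rw [Finset.card_le_one]
  intro a ha b hb
  rw [Finset.mem_inter, mem_Pset, mem_cn_iff] at ha hb
  apply Fin.ext
  simp only [pr] at ha hb
  omega

lemma compl_cn_g0 :
    Finset.univ \ cn (Gk (2*k+1)) (c0 k)
      = Finset.univ.filter (fun u : Fin (2*k+1) => u.val % 2 = 0 ∧ 4 ≤ u.val) := by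
  ext u
  rw [Finset.mem_sdiff, Finset.mem_filter, mem_cn_iff]
  simp only [Finset.mem_univ, true_and, pr, val_c0]
  omega

lemma card_compl_cn_g0 :
    (Finset.univ \ cn (Gk (2*k+1)) (c0 k)).card = k - 1 := by
  rw [compl_cn_g0]
  exact (card_val_filter _ (fun m => m % 2 = 0 ∧ 4 ≤ m) (fun u => Iff.rfl)).trans (count1 k)

lemma compl_cn_g0_subset : Finset.univ \ cn (Gk (2*k+1)) (c0 k) ⊆ Tset k := by
  rw [compl_cn_g0]
  intro u hu
  rw [Finset.mem_filter] at hu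
  rw [mem_Tset]
  omega

lemma card_Tset : (Tset k).card = k := by
  rw [Tset]
  exact (card_val_filter _ (fun m => m % 2 = 0 ∧ m ≠ 0) (fun u => Iff.rfl)).trans (count2 k)

lemma card_Pset (hk : 1 ≤ k) : (Pset k).card = k := by
  rw [Pset]
  exact (card_val_filter _ (fun m => m = 1 ∨ (m % 2 = 0 ∧ 4 ≤ m))
    (fun u => Iff.rfl)).trans (count3 hk)

lemma inter_cn_g1_Tset (hk : 1 ≤ k) :
    (Finset.univ \ cn (Gk (2*k+1)) (c1 k)) ∩ Tset k = Tset k := by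
  apply Finset.inter_eq_right.2
  intro u hu
  rw [mem_Tset] at hu
  rw [Finset.mem_sdiff]
  refine ⟨Finset.mem_univ u, fun hmem => ?_⟩
  rw [mem_cn_iff, val_c1 hk] at hmem
  simp only [pr] at hmem
  omega

lemma empty_ne_univ : (∅ : Finset (Fin (2*k+1))) ≠ Finset.univ := by
  intro h
  have h0 : (c0 k) ∈ (Finset.univ : Finset (Fin (2*k+1))) :=
    Finset.mem_univ _
  rw [← h] at h0
  exact absurd h0 (Finset.notMem_empty _)


lemma gammaG_eq (hk : 1 ≤ k) : gammaG (Gk (2*k+1)) = k := by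
  have hcard : Fintype.card (Fin (2*k+1)) = 2*k+1 := Fintype.card_fin _
  simp only [gammaG, gVal, hcard]
  have hendgame : auxVal (Gk (2*k+1)) (2*k) false (cn (Gk (2*k+1)) (c0 k)) = k - 1 := by
    have := lemA (Gk (2*k+1)) (Tset k) hT_packing (2*k)
      (cn (Gk (2*k+1)) (c0 k)) compl_cn_g0_subset
      (by rw [card_compl_cn_g0]; omega) false
    rw [this, card_compl_cn_g0]
  have hupper : auxVal (Gk (2*k+1)) (2*k+1) true ∅ ≤ k := by
    have hle := auxVal_true_le (G := Gk (2*k+1)) (n := 2*k) (v := c0 k)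
      empty_ne_univ (legal_self (Finset.notMem_empty _))
    rw [Finset.empty_union, hendgame] at hle
    omega
  have hlower : k ≤ auxVal (Gk (2*k+1)) (2*k+1) true ∅ := by
    have hB := lemB (Gk (2*k+1)) (Pset k) hP_packing (2*k+1) ∅
      (by rw [Finset.sdiff_empty, Finset.card_univ, hcard]) true
    rw [Finset.sdiff_empty, Finset.univ_inter, card_Pset hk] at hB
    exact hB
  omega

lemma gammaG'_eq (hk : 1 ≤ k) : gammaG' (Gk (2*k+1)) = k + 1 := by
  have hcard : Fintype.card (Fin (2*k+1)) = 2*k+1 := Fintype.card_fin _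
  simp only [gammaG', gVal', hcard]
  have hlower : k + 1 ≤ auxVal (Gk (2*k+1)) (2*k+1) false ∅ := by
    -- Staller plays vertex 1 (a pendant leaf of the center)
    have hfuel : (Finset.univ \ cn (Gk (2*k+1)) (c1 k)).card ≤ 2*k := by
      rw [← Finset.compl_eq_univ_sdiff, Finset.card_compl, hcard]
      have h1 : 1 ≤ (cn (Gk (2*k+1)) (c1 k)).card :=
        Finset.card_pos.2 ⟨_, self_mem_cn⟩
      omega
    have hB := lemB (Gk (2*k+1)) (Tset k) hT_packing (2*k)
      (cn (Gk (2*k+1)) (c1 k)) hfuel true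
    rw [inter_cn_g1_Tset hk, card_Tset] at hB
    have hle := le_auxVal_false (G := Gk (2*k+1)) (n := 2*k) (v := c1 k)
      empty_ne_univ (legal_self (Finset.notMem_empty _))
    rw [Finset.empty_union] at hle
    omega
  have hupper : auxVal (Gk (2*k+1)) (2*k+1) false ∅ ≤ k + 1 := by
    apply auxVal_false_le
    intro v hv
    rw [Finset.empty_union]
    have hsuff : auxVal (Gk (2*k+1)) (2*k) true (cn (Gk (2*k+1)) v) ≤ k := by
      by_cases hsub : cn (Gk (2*k+1)) (c0 k) ⊆ cn (Gk (2*k+1)) v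
      · -- v's neighbourhood contains the whole center's: endgame already
        have hss : Finset.univ \ cn (Gk (2*k+1)) v ⊆ Tset k :=
          subset_trans (Finset.sdiff_subset_sdiff (Finset.Subset.refl _) hsub)
            compl_cn_g0_subset
        have hcc : (Finset.univ \ cn (Gk (2*k+1)) v).card ≤ k - 1 := by
          calc (Finset.univ \ cn (Gk (2*k+1)) v).card
              ≤ (Finset.univ \ cn (Gk (2*k+1)) (c0 k)).card :=
                Finset.card_le_card
                  (Finset.sdiff_subset_sdiff (Finset.Subset.refl _) hsub)
            _ = k - 1 := card_compl_cn_g0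
        rw [lemA (Gk (2*k+1)) (Tset k) hT_packing (2*k) (cn (Gk (2*k+1)) v) hss
          (by omega) true]
        omega
      · -- Dominator answers with the center
        obtain ⟨m2, hm2⟩ : ∃ m2, 2*k = m2 + 1 := ⟨2*k - 1, by omega⟩
        have hne2 : cn (Gk (2*k+1)) v ≠ Finset.univ := by
          intro h
          exact hsub (h ▸ Finset.subset_univ _)
        have hle := auxVal_true_le (n := m2) (v := c0 k) hne2 hsub
        have hss : Finset.univ \ (cn (Gk (2*k+1)) v ∪ cn (Gk (2*k+1)) (c0 k))
            ⊆ Tset k :=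
          subset_trans
            (Finset.sdiff_subset_sdiff (Finset.Subset.refl _) Finset.subset_union_right)
            compl_cn_g0_subset
        have hcc : (Finset.univ \ (cn (Gk (2*k+1)) v ∪ cn (Gk (2*k+1)) (c0 k))).card
            ≤ k - 1 := by
          calc (Finset.univ \ (cn (Gk (2*k+1)) v ∪ cn (Gk (2*k+1)) (c0 k))).card
              ≤ (Finset.univ \ cn (Gk (2*k+1)) (c0 k)).card :=
                Finset.card_le_card
                  (Finset.sdiff_subset_sdiff (Finset.Subset.refl _)
                    Finset.subset_union_right)
            _ = k - 1 := card_compl_cn_g0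
        rw [lemA (Gk (2*k+1)) (Tset k) hT_packing m2
          (cn (Gk (2*k+1)) v ∪ cn (Gk (2*k+1)) (c0 k)) hss (by omega) false,
          ← hm2] at hle
        omega
    omega
  omega

end DomGameTree

/-- for every k ≥ 1 there is a tree T with γ_g(T) = k and γ_g'(T) = k + 1. -/
theorem stmt6 (k : ℕ) (hk : 1 ≤ k) :
    ∃ (n : ℕ) (T : SimpleGraph (Fin n)), T.IsTree ∧
      DomGame.gammaG T = k ∧ DomGame.gammaG' T = k + 1 :=
  ⟨2*k+1, DomGameTree.Gk (2*k+1), DomGameTree.Gk_isTree (by omega),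
    DomGameTree.gammaG_eq hk, DomGameTree.gammaG'_eq hk⟩
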